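/- For every integer n with n ≥ 2 and n ≡ 2 (mod 4), the n-dimensional simplified shuffle-cube SSQ_n is n-regular: every vertex of SSQ_n has exactly n neighbours. -/

import Mathlib

/-- Vertices of the `n`-dimensional simplified shuffle-cube: binary strings of
length `n` (encoded as functions `ℕ → Bool` vanishing from position `n` on)
such that for every `j` with `1 ≤ j ≤ (n-2)/4` the bits in positions
`4j+1` and `4j` are equal. -/
def SSQVertex (n : ℕ) : Type :=
  {u : ℕ → Bool // (∀ i, n ≤ i → u i = false) ∧
    ∀ j, 1 ≤ j → j ≤ (n - 2) / 4 → u (4 * j + 1) = u (4 * j)}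

/-- The set `V₀₀` = {1111, 0001, 0010, 0011} of 4-bit patterns
(most significant bit first). -/
def V00 : Set (Bool × Bool × Bool × Bool) :=
  {(true, true, true, true), (false, false, false, true),
   (false, false, true, false), (false, false, true, true)}

/-- The adjacency condition of the simplified shuffle-cube: either the two
strings agree everywhere except in exactly one of the bits in positions `1`
and `0`, or there is a `j` with `1 ≤ j ≤ (n-2)/4` such that the strings agree
outside the positions `4j-2, …, 4j+1` and the bitwise XOR of the `j`-th 4-bit
blocks lies in `V₀₀`. -/
def ssqRel (n : ℕ) (u v : ℕ → Bool) : Prop :=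
  ((∀ i, 2 ≤ i → u i = v i) ∧ ((u 0 = v 0) ↔ ¬ (u 1 = v 1))) ∨
  (∃ j, 1 ≤ j ∧ j ≤ (n - 2) / 4 ∧
    (∀ i, (i < 4 * j - 2 ∨ 4 * j + 1 < i) → u i = v i) ∧
    (xor (u (4 * j + 1)) (v (4 * j + 1)), xor (u (4 * j)) (v (4 * j)),
     xor (u (4 * j - 1)) (v (4 * j - 1)), xor (u (4 * j - 2)) (v (4 * j - 2))) ∈ V00)

/-- The `n`-dimensional simplified shuffle-cube `SSQ_n`. -/
def SSQ (n : ℕ) : SimpleGraph (SSQVertex n) :=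
  SimpleGraph.fromRel (fun u v => ssqRel n u.1 v.1)

/-! ### Auxiliary development -/

/-- The flip mask for each of the `n` neighbour moves. -/
def ssqMask {m : ℕ} : Fin 2 ⊕ Fin m × Fin 4 → ℕ → Bool
  | .inl i, t => decide (t = i.val)
  | .inr (j, k), t =>
      ((decide (t = 4*(j.val+1)+1) || decide (t = 4*(j.val+1))) && decide (k.val = 0)) ||
      (decide (t = 4*(j.val+1)-1) && !decide (k.val = 1)) ||
      (decide (t = 4*(j.val+1)-2) && !decide (k.val = 2))

lemma mask_at1 {m : ℕ} (j : Fin m) (k : Fin 4) :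
    ssqMask (.inr (j,k)) (4*(j.val+1)+1) = decide (k.val = 0) := by
  have h1 : 4*(j.val+1)+1 ≠ 4*(j.val+1) := by omega
  have h2 : 4*(j.val+1)+1 ≠ 4*(j.val+1)-1 := by omega
  have h3 : 4*(j.val+1)+1 ≠ 4*(j.val+1)-2 := by omega
  simp [ssqMask, h1, h2, h3]

lemma mask_at0 {m : ℕ} (j : Fin m) (k : Fin 4) :
    ssqMask (.inr (j,k)) (4*(j.val+1)) = decide (k.val = 0) := by
  have h1 : 4*(j.val+1) ≠ 4*(j.val+1)+1 := by omega
  have h2 : 4*(j.val+1) ≠ 4*(j.val+1)-1 := by omega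
  have h3 : 4*(j.val+1) ≠ 4*(j.val+1)-2 := by omega
  simp [ssqMask, h1, h2, h3]

lemma mask_atm1 {m : ℕ} (j : Fin m) (k : Fin 4) :
    ssqMask (.inr (j,k)) (4*(j.val+1)-1) = !decide (k.val = 1) := by
  have h1 : 4*(j.val+1)-1 ≠ 4*(j.val+1)+1 := by omega
  have h2 : 4*(j.val+1)-1 ≠ 4*(j.val+1) := by omega
  have h3 : 4*(j.val+1)-1 ≠ 4*(j.val+1)-2 := by omega
  simp [ssqMask, h1, h2, h3]

lemma mask_atm2 {m : ℕ} (j : Fin m) (k : Fin 4) :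
    ssqMask (.inr (j,k)) (4*(j.val+1)-2) = !decide (k.val = 2) := by
  have h1 : 4*(j.val+1)-2 ≠ 4*(j.val+1)+1 := by omega
  have h2 : 4*(j.val+1)-2 ≠ 4*(j.val+1) := by omega
  have h3 : 4*(j.val+1)-2 ≠ 4*(j.val+1)-1 := by omega
  simp [ssqMask, h1, h2, h3]

lemma mask_out {m : ℕ} (j : Fin m) (k : Fin 4) (t : ℕ)
    (h : t < 4*(j.val+1)-2 ∨ 4*(j.val+1)+1 < t) :
    ssqMask (.inr (j,k)) t = false := by
  have h1 : t ≠ 4*(j.val+1)+1 := by omega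
  have h2 : t ≠ 4*(j.val+1) := by omega
  have h3 : t ≠ 4*(j.val+1)-1 := by omega
  have h4 : t ≠ 4*(j.val+1)-2 := by omega
  simp [ssqMask, h1, h2, h3, h4]

lemma mask_inl_out {m : ℕ} (i : Fin 2) (t : ℕ) (h : 2 ≤ t) :
    ssqMask (m := m) (.inl i) t = false := by
  have : t ≠ i.val := by have := i.isLt; omega
  simp [ssqMask, this]

lemma inr_witness {m : ℕ} (j : Fin m) (k : Fin 4) :
    ∃ p, 4*(j.val+1)-2 ≤ p ∧ p ≤ 4*(j.val+1)-1 ∧ ssqMask (.inr (j,k)) p = true := by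
  by_cases h : k.val = 2
  · exact ⟨4*(j.val+1)-1, by omega, le_refl _, by
      rw [mask_atm1]; simp; omega⟩
  · exact ⟨4*(j.val+1)-2, le_refl _, by omega, by rw [mask_atm2]; simp [h]⟩

lemma ssq_xor_cancel_right (a b c : Bool) (h : xor a c = xor b c) : a = b := by
  revert h; cases a <;> cases b <;> cases c <;> decide

lemma xor_solve (a b c : Bool) (h : xor a b = c) : xor c a = b := by
  subst h; cases a <;> cases b <;> decide

lemma xor_recover (a b : Bool) : xor a (xor b a) = b := by
  cases a <;> cases b <;> decide

/-- The neighbour of `u` indexed by `x`. -/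
def ssqNbr {n m : ℕ} (hn : n = 4*m+2) (u : SSQVertex n) (x : Fin 2 ⊕ Fin m × Fin 4) :
    SSQVertex n :=
  ⟨fun t => xor (ssqMask x t) (u.1 t), by
    constructor
    · intro i hi
      have hu : u.1 i = false := u.2.1 i hi
      have hm : ssqMask x i = false := by
        cases x with
        | inl i' => exact mask_inl_out i' i (by omega)
        | inr jk =>
          obtain ⟨j, k⟩ := jk
          exact mask_out j k i (Or.inr (by have := j.isLt; omega))
      simp [hm, hu]
    · intro j' h1 h2
      have h2' : j' ≤ m := by omega
      have hu := u.2.2 j' h1 h2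
      have hm : ssqMask x (4*j'+1) = ssqMask x (4*j') := by
        cases x with
        | inl i' =>
          rw [mask_inl_out i' _ (by omega), mask_inl_out i' _ (by omega)]
        | inr jk =>
          obtain ⟨j, k⟩ := jk
          by_cases hj : j.val + 1 = j'
          · rw [← hj]
            rw [mask_at1, mask_at0]
          · rcases Nat.lt_or_ge (j.val+1) j' with h | h
            · rw [mask_out j k _ (Or.inr (by omega)), mask_out j k _ (Or.inr (by omega))]
            · rw [mask_out j k _ (Or.inl (by omega)), mask_out j k _ (Or.inl (by omega))]
      simp [hm, hu]⟩

lemma ssqNbr_inj {n m : ℕ} (hn : n = 4*m+2) (u : SSQVertex n) :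
    Function.Injective (ssqNbr hn u) := by
  intro x y h
  have hms : ∀ t, ssqMask x t = ssqMask y t := by
    intro t
    have := congrArg (fun w => w.1 t) h
    exact ssq_xor_cancel_right _ _ _ this
  cases x with
  | inl i =>
    cases y with
    | inl i' =>
      have := hms i.val
      simp [ssqMask] at this
      exact congrArg Sum.inl (Fin.ext this)
    | inr jk =>
      obtain ⟨j, k⟩ := jk
      obtain ⟨p, hp1, hp2, hp3⟩ := inr_witness j k
      have := hms p
      rw [hp3, mask_inl_out i p (by omega)] at this
      exact absurd this (by simp)
  | inr jk =>
    obtain ⟨j, k⟩ := jk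
    cases y with
    | inl i' =>
      obtain ⟨p, hp1, hp2, hp3⟩ := inr_witness j k
      have := hms p
      rw [hp3, mask_inl_out i' p (by omega)] at this
      exact absurd this (by simp)
    | inr jk' =>
      obtain ⟨j', k'⟩ := jk'
      have hjj : j = j' := by
        by_contra hne
        rcases Nat.lt_or_ge j.val j'.val with hlt | hge
        · obtain ⟨p, hp1, hp2, hp3⟩ := inr_witness j' k'
          have := hms p
          rw [hp3, mask_out j k p (Or.inr (by omega))] at this
          exact absurd this (by simp)
        · have hlt : j'.val < j.val := by
            rcases Nat.lt_or_ge j'.val j.val with h' | h'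
            · exact h'
            · exact absurd (Fin.ext (le_antisymm h' hge)) hne
          obtain ⟨p, hp1, hp2, hp3⟩ := inr_witness j k
          have := hms p
          rw [hp3, mask_out j' k' p (Or.inr (by omega))] at this
          exact absurd this.symm (by simp)
      subst hjj
      have e0 := hms (4*(j.val+1)+1)
      have e1 := hms (4*(j.val+1)-1)
      have e2 := hms (4*(j.val+1)-2)
      rw [mask_at1, mask_at1] at e0
      rw [mask_atm1, mask_atm1] at e1
      rw [mask_atm2, mask_atm2] at e2
      simp only [decide_eq_decide] at e0
      have e1' : (k.val = 1) ↔ (k'.val = 1) := by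
        simpa [decide_eq_decide] using e1
      have e2' : (k.val = 2) ↔ (k'.val = 2) := by
        simpa [decide_eq_decide] using e2
      have : k = k' := by
        have hk := k.isLt; have hk' := k'.isLt
        exact Fin.ext (by omega)
      rw [this]

lemma ssqRel_symm {n : ℕ} {u v : ℕ → Bool} (h : ssqRel n u v) : ssqRel n v u := by
  rcases h with ⟨h1, h2⟩ | ⟨j, hj1, hj2, h3, h4⟩
  · refine Or.inl ⟨fun i hi => (h1 i hi).symm, ?_⟩
    rw [show (v 0 = u 0) ↔ (u 0 = v 0) from eq_comm,
        show (v 1 = u 1) ↔ (u 1 = v 1) from eq_comm]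
    exact h2
  · refine Or.inr ⟨j, hj1, hj2, fun i hi => (h3 i hi).symm, ?_⟩
    rw [Bool.xor_comm (v (4*j+1)), Bool.xor_comm (v (4*j)),
        Bool.xor_comm (v (4*j-1)), Bool.xor_comm (v (4*j-2))]
    exact h4

lemma rel_to_mask {n m : ℕ} (hn : n = 4*m+2) (u v : SSQVertex n)
    (h : ssqRel n u.1 v.1) : ∃ x, ssqNbr hn u x = v := by
  rcases h with ⟨h1, h2⟩ | ⟨j, hj1, hj2, hout, hmem⟩
  · by_cases hb : u.1 0 = v.1 0
    · refine ⟨.inl 1, Subtype.ext (funext fun t => ?_)⟩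
      have hb1 : ¬ u.1 1 = v.1 1 := h2.mp hb
      show xor (ssqMask (.inl 1) t) (u.1 t) = v.1 t
      match t with
      | 0 => simp [ssqMask, hb]
      | 1 =>
        simp only [ssqMask]
        norm_num
        revert hb1; cases h1 : u.1 1 <;> cases h2 : v.1 1 <;> simp
      | (t+2) =>
        have : ssqMask (m := m) (.inl 1) (t+2) = false := mask_inl_out 1 _ (by omega)
        simp [this, h1 (t+2) (by omega)]
    · refine ⟨.inl 0, Subtype.ext (funext fun t => ?_)⟩
      have hb1 : u.1 1 = v.1 1 := by
        by_contra hc; exact hb (h2.mpr hc)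
      show xor (ssqMask (.inl 0) t) (u.1 t) = v.1 t
      match t with
      | 0 =>
        simp only [ssqMask]
        norm_num
        revert hb; cases h1 : u.1 0 <;> cases h2 : v.1 0 <;> simp
      | 1 => simp [ssqMask, hb1]
      | (t+2) =>
        have : ssqMask (m := m) (.inl 0) (t+2) = false := mask_inl_out 0 _ (by omega)
        simp [this, h1 (t+2) (by omega)]
  · have hjm : j ≤ m := by omega
    have hlt : j - 1 < m := by omega
    set jj : Fin m := ⟨j - 1, hlt⟩ with hjj
    have hJ : jj.val + 1 = j := by simp [hjj]; omega
    simp only [V00, Set.mem_insert_iff, Set.mem_singleton_iff, Prod.mk.injEq] at hmem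
    have hk : ∃ k : Fin 4,
        xor (u.1 (4*j+1)) (v.1 (4*j+1)) = decide (k.val = 0) ∧
        xor (u.1 (4*j)) (v.1 (4*j)) = decide (k.val = 0) ∧
        xor (u.1 (4*j-1)) (v.1 (4*j-1)) = !decide (k.val = 1) ∧
        xor (u.1 (4*j-2)) (v.1 (4*j-2)) = !decide (k.val = 2) := by
      rcases hmem with ⟨a, b, c, d⟩ | ⟨a, b, c, d⟩ | ⟨a, b, c, d⟩ | ⟨a, b, c, d⟩
      · exact ⟨0, by simp [a, b, c, d] <;> decide⟩
      · exact ⟨1, by simp [a, b, c, d] <;> decide⟩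
      · exact ⟨2, by simp [a, b, c, d] <;> decide⟩
      · exact ⟨3, by simp [a, b, c, d] <;> decide⟩
    obtain ⟨k, e1, e0, em1, em2⟩ := hk
    refine ⟨.inr (jj, k), Subtype.ext (funext fun t => ?_)⟩
    show xor (ssqMask (.inr (jj, k)) t) (u.1 t) = v.1 t
    by_cases h0 : t < 4*j-2 ∨ 4*j+1 < t
    · rw [mask_out jj k t (by rw [hJ]; exact h0)]
      simp [hout t h0]
    · have ht : t = 4*j+1 ∨ t = 4*j ∨ t = 4*j-1 ∨ t = 4*j-2 := by omega
      rcases ht with rfl | rfl | rfl | rfl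
      · rw [show 4*j+1 = 4*(jj.val+1)+1 by rw [hJ], mask_at1]
        rw [hJ]; exact xor_solve _ _ _ e1
      · rw [show 4*j = 4*(jj.val+1) by rw [hJ], mask_at0]
        rw [hJ]; exact xor_solve _ _ _ e0
      · rw [show 4*j-1 = 4*(jj.val+1)-1 by rw [hJ], mask_atm1]
        rw [hJ]; exact xor_solve _ _ _ em1
      · rw [show 4*j-2 = 4*(jj.val+1)-2 by rw [hJ], mask_atm2]
        rw [hJ]; exact xor_solve _ _ _ em2

lemma nbr_rel {n m : ℕ} (hn : n = 4*m+2) (u : SSQVertex n) (x : Fin 2 ⊕ Fin m × Fin 4) :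
    ssqRel n u.1 (ssqNbr hn u x).1 := by
  cases x with
  | inl i =>
    left
    constructor
    · intro t ht
      show u.1 t = xor (ssqMask (.inl i) t) (u.1 t)
      rw [mask_inl_out i t ht]; simp
    · show (u.1 0 = xor (ssqMask (.inl i) 0) (u.1 0)) ↔
        ¬ (u.1 1 = xor (ssqMask (.inl i) 1) (u.1 1))
      fin_cases i <;> simp [ssqMask]
  | inr jk =>
    obtain ⟨j, k⟩ := jk
    right
    refine ⟨j.val + 1, by omega, by have := j.isLt; omega, ?_, ?_⟩
    · intro t ht
      show u.1 t = xor (ssqMask (.inr (j,k)) t) (u.1 t)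
      rw [mask_out j k t ht]; simp
    · show (xor (u.1 _) (xor (ssqMask (.inr (j,k)) _) (u.1 _)),
           xor (u.1 _) (xor (ssqMask (.inr (j,k)) _) (u.1 _)),
           xor (u.1 _) (xor (ssqMask (.inr (j,k)) _) (u.1 _)),
           xor (u.1 _) (xor (ssqMask (.inr (j,k)) _) (u.1 _))) ∈ V00
      rw [xor_recover, xor_recover, xor_recover, xor_recover,
        mask_at1, mask_at0, mask_atm1, mask_atm2]
      fin_cases k <;> simp [V00]

lemma nbr_ne {n m : ℕ} (hn : n = 4*m+2) (u : SSQVertex n) (x : Fin 2 ⊕ Fin m × Fin 4) :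
    u ≠ ssqNbr hn u x := by
  have hw : ∃ p, ssqMask (m := m) x p = true := by
    cases x with
    | inl i => exact ⟨i.val, by simp [ssqMask]⟩
    | inr jk =>
      obtain ⟨j, k⟩ := jk
      obtain ⟨p, _, _, hp⟩ := inr_witness j k
      exact ⟨p, hp⟩
  obtain ⟨p, hp⟩ := hw
  intro heq
  have := congrArg (fun w => w.1 p) heq
  simp only [ssqNbr, hp] at this
  revert this
  cases u.1 p <;> simp

/-- For every `n ≥ 2` with `n ≡ 2 (mod 4)`, the simplified shuffle-cube
`SSQ_n` is `n`-regular: every vertex has exactly `n` neighbours. -/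
theorem ssq_regular (n : ℕ) (hn : 2 ≤ n) (hmod : n % 4 = 2)
    (u : SSQVertex n) :
    ((SSQ n).neighborSet u).ncard = n := by
  have hn4 : n = 4 * ((n - 2) / 4) + 2 := by omega
  have hset : (SSQ n).neighborSet u = Set.range (ssqNbr hn4 u) := by
    ext v
    simp only [SimpleGraph.mem_neighborSet, SSQ, SimpleGraph.fromRel_adj, Set.mem_range]
    constructor
    · rintro ⟨hne, h | h⟩
      · exact rel_to_mask hn4 u v h
      · exact rel_to_mask hn4 u v (ssqRel_symm h)
    · rintro ⟨x, rfl⟩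
      exact ⟨nbr_ne hn4 u x, Or.inl (nbr_rel hn4 u x)⟩
  rw [hset, ← Set.image_univ, Set.ncard_image_of_injective _ (ssqNbr_inj hn4 u),
    Set.ncard_univ]
  simp only [Nat.card_eq_fintype_card, Fintype.card_sum, Fintype.card_prod, Fintype.card_fin]
  omega
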